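/- Distance array correctness under separator-based top-down construction: let T be a rooted tree over the vertices of a weighted graph G such that for every vertex v, a designated neighbor set N(v) ⊆ ancestors_T(v) separates v from all non-descendants, and shortcut weights satisfy |sc(v,u)| = length of a shortest v–u path internal to lower-ranked vertices (so min over u∈N(v) of |sc(v,u)| + d(u,a) computes d(v,a) for any ancestor a). If distance labels are computed top-down by X(v).dis[a] = min_{u ∈ N(v)} ( |sc(v,u)| + X(u).dis[a] ) for each ancestor a of v (with X(u).dis[a] interpreted as d(u,a), available since u is processed before v), then X(v).dis[a] = d_G(v,a) for all v and all ancestors a. -/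

import Mathlib

open scoped ENNReal

/-- Cost of the walk `s :: p ++ [t]`: `p` is the list of intermediate vertices, a missing
edge has weight `⊤`. -/
noncomputable def pathCost {V : Type*} (w : V → V → ℝ≥0∞) : V → List V → V → ℝ≥0∞
  | s, [], t => w s t
  | s, x :: xs, t => w s x + pathCost w x xs t

/-- Shortest-path distance induced by the weight function `w`. -/
noncomputable def gdist {V : Type*} [DecidableEq V] (w : V → V → ℝ≥0∞) (s t : V) : ℝ≥0∞ :=
  if s = t then 0 else ⨅ p : List V, pathCost w s p t


namespace TopDownAux

variable {V : Type*}

lemma pathCost_append (w : V → V → ℝ≥0∞) (s : V) (p : List V) (x : V) (q : List V) (t : V) :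
    pathCost w s (p ++ x :: q) t = pathCost w s p x + pathCost w x q t := by
  induction p generalizing s with
  | nil => simp [pathCost]
  | cons y ys ih => simp [pathCost, ih, add_assoc]

lemma pathCost_reverse (w : V → V → ℝ≥0∞) (hsymm : ∀ u v, w u v = w v u)
    (s : V) (p : List V) (t : V) :
    pathCost w s p t = pathCost w t p.reverse s := by
  induction p generalizing s with
  | nil => simpa [pathCost] using hsymm s t
  | cons y ys ih =>
      simp only [List.reverse_cons]
      rw [show (ys.reverse ++ [y]) = ys.reverse ++ y :: [] from rfl,
        pathCost_append]
      simp [pathCost, ← ih, hsymm s y, add_comm]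

variable [DecidableEq V]

lemma gdist_le_pathCost (w : V → V → ℝ≥0∞) (s : V) (p : List V) (t : V) :
    gdist w s t ≤ pathCost w s p t := by
  unfold gdist
  split
  · exact zero_le
  · exact iInf_le _ p

lemma gdist_symm (w : V → V → ℝ≥0∞) (hsymm : ∀ u v, w u v = w v u) (s t : V) :
    gdist w s t = gdist w t s := by
  have key : ∀ s t : V, gdist w s t ≤ gdist w t s := by
    intro s t
    by_cases h : s = t
    · subst h; exact le_rfl
    · rw [show gdist w t s = ⨅ p : List V, pathCost w t p s from by
        unfold gdist; rw [if_neg (Ne.symm h)]]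
      refine le_iInf fun q => ?_
      rw [pathCost_reverse w hsymm t q s]
      exact gdist_le_pathCost w s q.reverse t
  exact le_antisymm (key s t) (key t s)

omit [DecidableEq V] in
lemma list_split (P : V → Prop) :
    ∀ p : List V, (∀ x ∈ p, P x) ∨
      ∃ pre b suf, p = pre ++ b :: suf ∧ (∀ x ∈ pre, P x) ∧ ¬ P b := by
  intro p
  induction p with
  | nil => left; simp
  | cons x xs ih =>
      by_cases hx : P x
      · rcases ih with h | ⟨pre, b, suf, rfl, hpre, hb⟩
        · left
          intro y hy
          rcases List.mem_cons.mp hy with rfl | hy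
          · exact hx
          · exact h y hy
        · right
          refine ⟨x :: pre, b, suf, rfl, ?_, hb⟩
          intro y hy
          rcases List.mem_cons.mp hy with rfl | hy
          · exact hx
          · exact hpre y hy
      · right
        exact ⟨[], x, xs, rfl, by simp, hx⟩

end TopDownAux

open TopDownAux

/-- Distance-array correctness of the separator-based top-down construction: in an
elimination tree where each vertex `v` has its elimination-time neighbor set `N v` among its
ancestors, `N v` separates `v` from every non-descendant, and the shortcut weights are the
lengths of shortest paths internal to lower-ranked vertices, the top-down recursion
`X v a = min over u ∈ N v of (sc v u + X u a)` computes `X v a = d_G(v,a)` for every vertex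
`v` and every ancestor `a` of `v`. -/
theorem top_down_distance_labels_correct
    {V : Type*} [Fintype V] [DecidableEq V]
    (w : V → V → ℝ≥0∞) (hsymm : ∀ u v, w u v = w v u)
    (r : V → ℕ) (hinj : Function.Injective r)
    (N : V → Finset V)
    (anc : V → V → Prop)   -- `anc v a`: `a` is a (strict) ancestor of `v` in the tree
    (hNanc : ∀ v, ∀ u ∈ N v, anc v u)
    (hancrank : ∀ v a, anc v a → r v < r a)
    (hanctrans : ∀ v a b, anc v a → anc a b → anc v b)
    -- ancestors of a vertex are linearly ordered by the ancestor relation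
    (hlinear : ∀ v x y, anc v x → anc v y → (x = y ∨ anc x y ∨ anc y x))
    -- separation: every finite-cost walk from `v` to a non-descendant `a` meets `N v`
    (hsep : ∀ v a, ¬ (a = v ∨ anc a v) → ∀ p : List V,
      pathCost w v p a ≠ ⊤ → ∃ b ∈ p ++ [a], b ∈ N v)
    -- shortcut weights: shortest `v`–`u` distance among paths internal to ranks below `r v`
    (sc : V → V → ℝ≥0∞)
    (hsc : ∀ v u, sc v u =
      ⨅ (p : List V), ⨅ (_ : ∀ x ∈ p, r x < r v), pathCost w v p u)
    -- the top-down computed labels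
    (X : V → V → ℝ≥0∞)
    (hXbase : ∀ v, X v v = 0)
    (hXsymm : ∀ u a, X u a = X a u)
    (hXrec : ∀ v a, anc v a →
      X v a = ⨅ u ∈ (N v : Set V), sc v u + X u a) :
    ∀ v a, anc v a → X v a = gdist w v a := by
  set m : V → ℕ := fun v => (Finset.univ.filter (fun x => r v < r x)).card with hm
  have hmlt : ∀ v u, anc v u → m u < m v := by
    intro v u h
    apply Finset.card_lt_card
    constructor
    · intro x hx
      simp only [Finset.mem_filter, Finset.mem_univ, true_and] at hx ⊢
      exact lt_trans (hancrank v u h) hx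
    · intro hsub
      have hu : u ∈ Finset.univ.filter (fun x => r v < r x) :=
        Finset.mem_filter.mpr ⟨Finset.mem_univ u, hancrank v u h⟩
      have := hsub hu
      simp only [Finset.mem_filter, Finset.mem_univ, true_and] at this
      exact lt_irrefl _ this
  suffices H : ∀ n : ℕ, ∀ v a, anc v a → m v < n → X v a = gdist w v a by
    intro v a h
    exact H (m v + 1) v a h (Nat.lt_succ_self _)
  intro n
  induction n with
  | zero => intro v a _ h; exact absurd h (Nat.not_lt_zero _)
  | succ n ih =>
    intro v a hva hvn
    have hvn' : m v ≤ n := Nat.lt_succ_iff.mp hvn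
    -- labels of neighbours are already correct
    have hXN : ∀ u ∈ N v, X u a = gdist w u a := by
      intro u hu
      have hu' : anc v u := hNanc v u hu
      rcases hlinear v u a hu' hva with rfl | h | h
      · rw [hXbase]
        unfold gdist
        rw [if_pos rfl]
      · exact ih u a h (lt_of_lt_of_le (hmlt v u hu') hvn')
      · rw [hXsymm, gdist_symm w hsymm]
        exact ih a u h (lt_of_lt_of_le (hmlt v a hva) hvn')
    rw [hXrec v a hva]
    have hEq : (⨅ u ∈ (N v : Set V), sc v u + X u a)
        = ⨅ u ∈ (N v : Set V), sc v u + gdist w u a := by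
      refine iInf_congr fun u => iInf_congr fun hu => ?_
      rw [hXN u (Finset.mem_coe.mp hu)]
    rw [hEq]
    have hvne : v ≠ a := fun h => lt_irrefl _ (h ▸ hancrank v a hva)
    have hna : ¬ (a = v ∨ anc a v) := by
      rintro (rfl | h)
      · exact hvne rfl
      · exact lt_irrefl _ (lt_trans (hancrank v a hva) (hancrank a v h))
    apply le_antisymm
    · -- computed value ≤ true distance
      rw [show gdist w v a = ⨅ p : List V, pathCost w v p a from by
        unfold gdist; rw [if_neg hvne]]
      refine le_iInf fun p => ?_
      -- the low-rank-prefix case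
      have hleft : ∀ q : List V, (∀ x ∈ q, r x < r v) →
          (⨅ u ∈ (N v : Set V), sc v u + gdist w u a) ≤ pathCost w v q a := by
        intro q hq
        by_cases htop : pathCost w v q a = ⊤
        · rw [htop]; exact le_top
        obtain ⟨c, hc1, hc2⟩ := hsep v a hna q htop
        have hca : c = a := by
          rcases List.mem_append.mp hc1 with h | h
          · exact absurd (hq c h) (not_lt_of_gt (hancrank v c (hNanc v c hc2)))
          · simpa using h
        subst hca
        calc (⨅ u ∈ (N v : Set V), sc v u + gdist w u c)
            ≤ sc v c + gdist w c c := iInf₂_le c (Finset.mem_coe.mpr hc2)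
          _ = sc v c := by
              rw [show gdist w c c = 0 from by unfold gdist; rw [if_pos rfl], add_zero]
          _ ≤ pathCost w v q c := by
              rw [hsc]
              exact iInf₂_le q hq
      have claim : ∀ (k : ℕ) (q : List V), q.length ≤ k →
          (⨅ u ∈ (N v : Set V), sc v u + gdist w u a) ≤ pathCost w v q a := by
        intro k
        induction k with
        | zero =>
            intro q hq
            have : q = [] := List.length_eq_zero_iff.mp (Nat.le_zero.mp hq)
            subst this
            exact hleft [] (by simp)
        | succ k ihk =>
            intro q hq
            rcases list_split (fun x => r x < r v) q with hall | ⟨pre, b, suf, rfl, hpre, hb⟩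
            · exact hleft q hall
            · rw [pathCost_append]
              by_cases hbv : b = v
              · subst hbv
                have hsuf : suf.length ≤ k := by
                  simp only [List.length_append, List.length_cons] at hq
                  omega
                exact le_trans (ihk suf hsuf) le_add_self
              · by_cases htop : pathCost w v pre b = ⊤
                · rw [htop, top_add]; exact le_top
                have hnb : ¬ (b = v ∨ anc b v) := by
                  rintro (rfl | h)
                  · exact hbv rfl
                  · exact hb (hancrank b v h)
                obtain ⟨c, hc1, hc2⟩ := hsep v b hnb pre htop
                have hcb : c = b := by
                  rcases List.mem_append.mp hc1 with h | h
                  · exact absurd (hpre c h) (not_lt_of_gt (hancrank v c (hNanc v c hc2)))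
                  · simpa using h
                subst hcb
                calc (⨅ u ∈ (N v : Set V), sc v u + gdist w u a)
                    ≤ sc v c + gdist w c a := iInf₂_le c (Finset.mem_coe.mpr hc2)
                  _ ≤ pathCost w v pre c + pathCost w c suf a := by
                      refine add_le_add ?_ (gdist_le_pathCost w c suf a)
                      rw [hsc]
                      exact iInf₂_le pre hpre
      exact claim p.length p le_rfl
    · -- true distance ≤ computed value
      refine le_iInf fun u => le_iInf fun hu => ?_
      rw [hsc v u, ENNReal.iInf_add]
      refine le_iInf fun p => ?_
      rw [ENNReal.iInf_add]
      refine le_iInf fun hp => ?_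
      by_cases hua : u = a
      · subst hua
        rw [show gdist w u u = 0 from by unfold gdist; rw [if_pos rfl], add_zero]
        exact gdist_le_pathCost w v p u
      · rw [show gdist w u a = ⨅ q : List V, pathCost w u q a from by
          unfold gdist; rw [if_neg hua], ENNReal.add_iInf]
        refine le_iInf fun q => ?_
        rw [← pathCost_append]
        exact gdist_le_pathCost w v (p ++ u :: q) a
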